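/- Let K ≥ 1 and c ≥ 1 be reals and let 1 < α < 2. Then the function q(x) = x·(x + c^α − 1)·(x + c − 1)^{1−α} + (K − x)·x^{2−α} is strictly concave on the interval [1, K]; in particular its second derivative satisfies q''(x) < 0 for all x∈[1,K]. -/

import Mathlib

open Real Set

private lemma q1_hasDeriv (K c α : ℝ) {x : ℝ} (hx : 0 < x) (hv : 0 < x + c - 1) :
    HasDerivAt (fun x : ℝ => x * (x + c ^ α - 1) * (x + c - 1) ^ (1 - α) + (K - x) * x ^ (2 - α))
      ((2*x + c^α - 1) * (x + c - 1) ^ (1 - α)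
        + (1-α) * (x * (x + c^α - 1)) * (x + c - 1) ^ (-α)
        - x ^ (2-α) + (2-α) * (K - x) * x ^ (1-α)) x := by
  have hv' : x + c - 1 ≠ 0 := hv.ne'
  have hx' : x ≠ 0 := hx.ne'
  have h1 : HasDerivAt (fun y : ℝ => y + c - 1) 1 x := by
    simpa using ((hasDerivAt_id x).add_const c).sub_const 1
  have h2 : HasDerivAt (fun y : ℝ => (y + c - 1) ^ (1 - α))
      (1 * (1-α) * (x + c - 1) ^ (1 - α - 1)) x := h1.rpow_const (Or.inl hv')
  have h3 : HasDerivAt (fun y : ℝ => y * (y + c^α - 1))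
      (1 * (x + c^α - 1) + x * 1) x :=
    (hasDerivAt_id x).mul (((hasDerivAt_id x).add_const (c^α)).sub_const 1)
  have h4 := h3.mul h2
  have h5 : HasDerivAt (fun y : ℝ => y ^ (2-α)) ((2-α) * x ^ (2-α-1)) x :=
    Real.hasDerivAt_rpow_const (Or.inl hx')
  have h6 := ((hasDerivAt_id x).const_sub K).mul h5
  have h7 := h4.add h6
  convert h7 using 1
  · rfl
  · rfl
  · rfl
  simp only [id_eq]
  rw [show (1:ℝ) - α - 1 = -α by ring, show (2:ℝ) - α - 1 = 1 - α by ring]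
  ring

private lemma q2_hasDeriv (K c α : ℝ) {x : ℝ} (hx : 0 < x) (hv : 0 < x + c - 1) :
    HasDerivAt (fun x : ℝ => (2*x + c^α - 1) * (x + c - 1) ^ (1 - α)
        + (1-α) * (x * (x + c^α - 1)) * (x + c - 1) ^ (-α)
        - x ^ (2-α) + (2-α) * (K - x) * x ^ (1-α))
      (2 * (x + c - 1) ^ (1-α) + 2*(1-α)*(2*x + c^α - 1) * (x + c - 1) ^ (-α)
        - α*(1-α)*(x*(x + c^α - 1)) * (x + c - 1) ^ (-1-α)
        - 2*(2-α) * x ^ (1-α) + (2-α)*(1-α)*(K-x) * x ^ (-α)) x := by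
  have hv' : x + c - 1 ≠ 0 := hv.ne'
  have hx' : x ≠ 0 := hx.ne'
  have h1 : HasDerivAt (fun y : ℝ => y + c - 1) 1 x := by
    simpa using ((hasDerivAt_id x).add_const c).sub_const 1
  have h2 : HasDerivAt (fun y : ℝ => (y + c - 1) ^ (1 - α))
      (1 * (1-α) * (x + c - 1) ^ (1 - α - 1)) x := h1.rpow_const (Or.inl hv')
  have h2' : HasDerivAt (fun y : ℝ => (y + c - 1) ^ (-α))
      (1 * (-α) * (x + c - 1) ^ (-α - 1)) x := h1.rpow_const (Or.inl hv')
  have h3 : HasDerivAt (fun y : ℝ => 2*y + c^α - 1) 2 x := by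
    simpa using (((hasDerivAt_id x).const_mul 2).add_const (c^α)).sub_const 1
  have h4 := h3.mul h2
  have h5 : HasDerivAt (fun y : ℝ => y * (y + c^α - 1))
      (1 * (x + c^α - 1) + x * 1) x :=
    (hasDerivAt_id x).mul (((hasDerivAt_id x).add_const (c^α)).sub_const 1)
  have h6 := ((h5.const_mul (1-α)).mul h2')
  have h7 : HasDerivAt (fun y : ℝ => y ^ (2-α)) ((2-α) * x ^ (2-α-1)) x :=
    Real.hasDerivAt_rpow_const (Or.inl hx')
  have h8 : HasDerivAt (fun y : ℝ => y ^ (1-α)) ((1-α) * x ^ (1-α-1)) x :=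
    Real.hasDerivAt_rpow_const (Or.inl hx')
  have h9 := (((hasDerivAt_id x).const_sub K).const_mul (2-α)).mul h8
  have h10 := ((h4.add h6).sub h7).add h9
  convert h10 using 1
  · rfl
  · rfl
  · rfl
  simp only [id_eq]
  rw [show (1:ℝ) - α - 1 = -α by ring, show (2:ℝ) - α - 1 = 1 - α by ring,
    show -α - 1 = -1 - α by ring]
  ring

private lemma q2_neg (K c : ℝ) (hK : 1 ≤ K) (hc : 1 ≤ c)
    (α : ℝ) (hα1 : 1 < α) (hα2 : α < 2) {x : ℝ} (hx1 : 1 ≤ x) (hxK : x ≤ K) :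
    2 * (x + c - 1) ^ (1-α) + 2*(1-α)*(2*x + c^α - 1) * (x + c - 1) ^ (-α)
        - α*(1-α)*(x*(x + c^α - 1)) * (x + c - 1) ^ (-1-α)
        - 2*(2-α) * x ^ (1-α) + (2-α)*(1-α)*(K-x) * x ^ (-α) < 0 := by
  have hx0 : (0:ℝ) < x := by linarith
  have hv0 : (0:ℝ) < x + c - 1 := by linarith
  have hxv : x ≤ x + c - 1 := by linarith
  set v : ℝ := x + c - 1 with hvdef
  have hA : (0:ℝ) < v ^ (-1-α) := rpow_pos_of_pos hv0 _
  have hB : (0:ℝ) < x ^ (-α) := rpow_pos_of_pos hx0 _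
  have e1 : v ^ (-α) = v * v ^ (-1-α) := by
    rw [show -α = 1 + (-1-α) by ring, rpow_add hv0, rpow_one]
  have e2 : v ^ (1-α) = v * (v * v ^ (-1-α)) := by
    rw [← e1, show (1:ℝ)-α = 1 + -α by ring, rpow_add hv0, rpow_one]
  have e3 : x ^ (1-α) = x * x ^ (-α) := by
    rw [show (1:ℝ)-α = 1 + -α by ring, rpow_add hx0, rpow_one]
  have hdc : c ≤ c ^ α := by
    calc c = c ^ (1:ℝ) := (rpow_one c).symm
    _ ≤ c ^ α := rpow_le_rpow_of_exponent_le hc hα1.le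
  -- comparison v^{1-α} ≤ x^{1-α}
  have hcomp : v ^ (1-α) ≤ x ^ (1-α) :=
    rpow_le_rpow_of_nonpos hx0 hxv (by linarith)
  -- decomposition
  have hdecomp : 2 * v ^ (1-α) + 2*(1-α)*(2*x + c^α - 1) * v ^ (-α)
        - α*(1-α)*(x*(x + c^α - 1)) * v ^ (-1-α)
        - 2*(2-α) * x ^ (1-α) + (2-α)*(1-α)*(K-x) * x ^ (-α)
      = (3-α)*(2-α) * (v ^ (1-α) - x ^ (1-α))
        + (2-α)*(1-α) * ((c^α - 2*c + 1) * v ^ (-α) + K * x ^ (-α))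
        + (-((c-1)*(c^α - c)*α*(α-1))) * v ^ (-1-α) := by
    rw [e1, e2, e3, hvdef]; ring
  rw [hdecomp]
  have hT1 : (3-α)*(2-α) * (v ^ (1-α) - x ^ (1-α)) ≤ 0 := by
    apply mul_nonpos_of_nonneg_of_nonpos
    · nlinarith
    · linarith
  have hT3 : (-((c-1)*(c^α - c)*α*(α-1))) * v ^ (-1-α) ≤ 0 := by
    apply mul_nonpos_of_nonpos_of_nonneg _ hA.le
    have h1 : 0 ≤ (c-1)*(c^α - c) := mul_nonneg (by linarith) (by linarith)
    have h2 := mul_nonneg (mul_nonneg h1 (by linarith : (0:ℝ) ≤ α)) (by linarith : (0:ℝ) ≤ α - 1)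
    linarith
  have hT2 : (2-α)*(1-α) * ((c^α - 2*c + 1) * v ^ (-α) + K * x ^ (-α)) < 0 := by
    apply mul_neg_of_neg_of_pos
    · nlinarith
    · -- (c^α - 2c + 1) v^{-α} + K x^{-α} > 0
      have h1 : v * v ^ (-α) ≤ K * x ^ (-α) := by
        calc v * v ^ (-α) = v ^ (1-α) := by rw [e1, e2]
        _ ≤ x ^ (1-α) := hcomp
        _ = x * x ^ (-α) := e3
        _ ≤ K * x ^ (-α) := by nlinarith
      have h2 : 0 < (c^α - 2*c + 1 + v) * v ^ (-α) := by
        apply mul_pos _ (rpow_pos_of_pos hv0 _)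
        have : c ^ α - 2*c + 1 + v = c^α - c + x := by rw [hvdef]; ring
        rw [this]; linarith
      nlinarith
  linarith

theorem stmt_15 (K c : ℝ) (hK : 1 ≤ K) (hc : 1 ≤ c)
    (α : ℝ) (hα1 : 1 < α) (hα2 : α < 2) :
    StrictConcaveOn ℝ (Set.Icc (1:ℝ) K)
      (fun x : ℝ => x * (x + c ^ α - 1) * (x + c - 1) ^ (1 - α) + (K - x) * x ^ (2 - α))
    ∧ ∀ x ∈ Set.Icc (1:ℝ) K,
        deriv (deriv (fun x : ℝ =>
          x * (x + c ^ α - 1) * (x + c - 1) ^ (1 - α) + (K - x) * x ^ (2 - α))) x < 0 := by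
  set q : ℝ → ℝ := fun x : ℝ =>
    x * (x + c ^ α - 1) * (x + c - 1) ^ (1 - α) + (K - x) * x ^ (2 - α) with hq
  have hpos : ∀ y : ℝ, 0 < y → 0 < y + c - 1 := fun y hy => by linarith
  have hd2 : ∀ x ∈ Set.Icc (1:ℝ) K, deriv (deriv q) x < 0 := by
    intro x hx
    obtain ⟨hx1, hxK⟩ := hx
    have hx0 : (0:ℝ) < x := by linarith
    have hev : deriv q =ᶠ[nhds x] (fun x : ℝ => (2*x + c^α - 1) * (x + c - 1) ^ (1 - α)
        + (1-α) * (x * (x + c^α - 1)) * (x + c - 1) ^ (-α)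
        - x ^ (2-α) + (2-α) * (K - x) * x ^ (1-α)) := by
      filter_upwards [Ioi_mem_nhds hx0] with y hy
      exact (q1_hasDeriv K c α hy (hpos y hy)).deriv
    rw [hev.deriv_eq, (q2_hasDeriv K c α hx0 (hpos x hx0)).deriv]
    exact q2_neg K c hK hc α hα1 hα2 hx1 hxK
  constructor
  · apply strictConcaveOn_of_deriv2_neg (convex_Icc 1 K)
    · intro x hx
      have hx0 : (0:ℝ) < x := by linarith [hx.1]
      exact (q1_hasDeriv K c α hx0 (hpos x hx0)).continuousAt.continuousWithinAt
    · intro x hx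
      have hx' : x ∈ Set.Icc (1:ℝ) K := interior_subset hx
      simpa only [Function.iterate_succ, Function.iterate_zero, Function.comp_apply,
        id_eq] using hd2 x hx'
  · exact hd2
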